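/- Let G be a topological group and N a normal subgroup of G. If the closure of {e} in N (with the subspace topology) is open in N, and the closure of {e_{G/N}} in G/N (with the quotient topology) is open in G/N, then the closure of {e_G} in G is open in G. In other words, the class of almost trivial topological groups has the three space property. -/

import Mathlib

theorem stmt11 (G : Type*) [Group G] [TopologicalSpace G] [IsTopologicalGroup G]
    (N : Subgroup G) [N.Normal]
    (h1 : IsOpen (closure ({1} : Set N)))
    (h2 : IsOpen (closure ({1} : Set (G ⧸ N)))) :
    IsOpen (closure ({1} : Set G)) := by
  -- From h1: find open U in G with coe ⁻¹' U = closure {1} in N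
  obtain ⟨U, hUopen, hU⟩ := isOpen_induced_iff.mp h1
  have hmemN : ∀ g : N, (g : G) ∈ U → (g : G) ∈ closure ({1} : Set G) := by
    intro g hg
    have : g ∈ closure ({1} : Set N) := by rw [← hU]; exact hg
    have := (Topology.IsEmbedding.subtypeVal.closure_eq_preimage_closure_image ({1} : Set N)) ▸ this
    simpa using this
  have h1U : (1 : G) ∈ U := by
    have : (1 : N) ∈ closure ({1} : Set N) := subset_closure rfl
    rw [← hU] at this
    simpa using this
  -- Preimage of closure {1} in G/N
  set P : Set G := (QuotientGroup.mk : G → G ⧸ N) ⁻¹' closure ({1} : Set (G ⧸ N)) with hP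
  have hPopen : IsOpen P := h2.preimage continuous_quot_mk
  have h1P : (1 : G) ∈ P := by
    simp only [hP, Set.mem_preimage]
    exact subset_closure (by simp)
  -- key: U ∩ P ⊆ closure {1}
  have hkey : U ∩ P ⊆ closure ({1} : Set G) := by
    intro x ⟨hxU, hxP⟩
    rw [mem_closure_iff]
    intro W hW hxW
    -- W ∩ U open neighborhood of x, its image is open nbhd of mk x ∈ closure {1}
    have hWU : IsOpen (W ∩ U) := hW.inter hUopen
    have himg : IsOpen ((QuotientGroup.mk : G → G ⧸ N) '' (W ∩ U)) :=
      QuotientGroup.isOpenMap_coe _ hWU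
    have hmkx : (QuotientGroup.mk x : G ⧸ N) ∈ (QuotientGroup.mk : G → G ⧸ N) '' (W ∩ U) :=
      ⟨x, ⟨hxW, hxU⟩, rfl⟩
    have h1img : (1 : G ⧸ N) ∈ (QuotientGroup.mk : G → G ⧸ N) '' (W ∩ U) := by
      have := mem_closure_iff.mp hxP _ himg hmkx
      obtain ⟨y, hy, hy1⟩ := this
      rw [Set.mem_singleton_iff] at hy1
      rwa [← hy1]
    obtain ⟨n, hnWU, hn1⟩ := h1img
    have hnN : n ∈ N := by
      rwa [← QuotientGroup.eq_one_iff]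
    -- n ∈ N ∩ U ⊆ closure {1}
    have hncl : n ∈ closure ({1} : Set G) := hmemN ⟨n, hnN⟩ hnWU.2
    have := mem_closure_iff.mp hncl _ hWU hnWU
    obtain ⟨z, hz, hz1⟩ := this
    exact ⟨z, hz.1, hz1⟩
  -- closure {1} is a subgroup containing the nbhd U ∩ P of 1, hence open
  have hsub : (((⊥ : Subgroup G).topologicalClosure : Subgroup G) : Set G)
      = closure ({1} : Set G) := by
    simp [Subgroup.topologicalClosure]
  have : IsOpen (((⊥ : Subgroup G).topologicalClosure : Subgroup G) : Set G) := by
    apply Subgroup.isOpen_of_mem_nhds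
    rw [hsub]
    exact Filter.mem_of_superset ((hUopen.inter hPopen).mem_nhds ⟨h1U, h1P⟩) hkey
  rwa [hsub] at this
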